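/- arXiv:1806.02102 — 6 statements merged into one kernel-verified Lean document; each statement's English description precedes it below -/
import Mathlib

section
/- Let G be a finite group and H a proper subgroup of G. Then κ_P(G) = κ_P(H) if and only if every element x of G \ H satisfies x^2 = 1 and x h x^{-1} = h^{-1} for all h ∈ H (so that H is a normal subgroup inverted by every element outside H, and every element of G \ H is an involution). -/
/-- The number of spanning trees (tree-number / complexity) of a simple graph. -/
noncomputable def treeNumber {V : Type*} (G : SimpleGraph V) : ℕ :=
  Nat.card {T : SimpleGraph V // T ≤ G ∧ T.IsTree}

/-- The power graph of a group: distinct `x, y` are adjacent iff one is a power of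
the other, i.e. one lies in the cyclic subgroup generated by the other. -/
def powerGraph (G : Type*) [Group G] : SimpleGraph G where
  Adj x y := x ≠ y ∧ (x ∈ Subgroup.zpowers y ∨ y ∈ Subgroup.zpowers x)
  symm := ⟨fun _ _ h => ⟨h.1.symm, h.2.symm⟩⟩
  loopless := ⟨fun _ h => h.1 rfl⟩

namespace TNAux

open SimpleGraph Walk

variable {V : Type*}

lemma cycle_two_nbrs_start {K : SimpleGraph V} {x : V} {c : K.Walk x x} (hc : c.IsCycle) :
    ∃ y z, y ≠ z ∧ y ∈ c.support ∧ z ∈ c.support ∧ K.Adj x y ∧ K.Adj x z := by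
  have h3 := hc.three_le_length
  have hnn : ¬ c.Nil := by rw [Walk.not_nil_iff_lt_length]; omega
  have hnn' : ¬ c.reverse.Nil := by
    rw [Walk.not_nil_iff_lt_length, Walk.length_reverse]; omega
  obtain ⟨z, haz, q', hq'⟩ := Walk.not_nil_iff.mp hnn'
  obtain ⟨y, hay, q, rfl⟩ := Walk.not_nil_iff.mp hnn
  refine ⟨y, z, ?_, ?_, ?_, hay, haz⟩
  · intro h
    subst h
    have he : (Walk.cons hay q).edges.reverse = s(x, y) :: q'.edges := by
      rw [← Walk.edges_reverse, hq', Walk.edges_cons]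
    rw [Walk.edges_cons, List.reverse_cons] at he
    have hql : q.edges.length = q.length := q.length_edges
    have hq3 : 0 < q.edges.length := by
      simp only [Walk.length_cons] at h3; omega
    obtain ⟨e, t, het⟩ := List.exists_cons_of_ne_nil
      (by intro hnil; rw [← List.length_reverse] at hq3; simp [hnil] at hq3 :
        q.edges.reverse ≠ [])
    rw [het, List.cons_append] at he
    have hey : e = s(x, y) := (List.cons_eq_cons.mp he).1
    have hmem : s(x, y) ∈ q.edges := by
      rw [← List.mem_reverse, het, hey]; exact List.mem_cons_self
    have hnd := hc.isCircuit.isTrail.edges_nodup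
    rw [Walk.edges_cons, List.nodup_cons] at hnd
    exact hnd.1 hmem
  · rw [Walk.support_cons]
    exact List.mem_cons_of_mem _ q.start_mem_support
  · have : z ∈ (Walk.cons hay q).reverse.support := by
      rw [hq', Walk.support_cons]
      exact List.mem_cons_of_mem _ q'.start_mem_support
    rwa [Walk.support_reverse, List.mem_reverse] at this

lemma cycle_two_nbrs {K : SimpleGraph V} {v x : V} {c : K.Walk v v} (hc : c.IsCycle)
    (hx : x ∈ c.support) :
    ∃ y z, y ≠ z ∧ y ∈ c.support ∧ z ∈ c.support ∧ K.Adj x y ∧ K.Adj x z := by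
  classical
  obtain ⟨y, z, hyz, hy, hz, hay, haz⟩ := cycle_two_nbrs_start (hc.rotate hx)
  have hsub : ∀ t, t ∈ (c.rotate x hx).support → t ∈ c.support := by
    intro t ht
    by_cases htx : t = x
    · exact htx ▸ hx
    · rw [Walk.support_eq_cons (c.rotate x hx), List.mem_cons] at ht
      rcases ht with ht | ht
      · exact absurd ht htx
      · have := (Walk.support_rotate c x hx).mem_iff.mp ht
        rw [Walk.support_eq_cons c]
        exact List.mem_cons_of_mem _ this
  exact ⟨y, z, hyz, hsub _ hy, hsub _ hz, hay, haz⟩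

lemma path_two_nbrs {K : SimpleGraph V} {a b x : V} {p : K.Walk a b} (hp : p.IsPath)
    (hx : x ∈ p.support) (hxa : x ≠ a) (hxb : x ≠ b) :
    ∃ y z, y ≠ z ∧ K.Adj x y ∧ K.Adj x z := by
  classical
  have hspec := p.take_spec hx
  have h1 : ¬ (p.takeUntil x hx).reverse.Nil := Walk.not_nil_of_ne hxa
  have h2 : ¬ (p.dropUntil x hx).Nil := Walk.not_nil_of_ne hxb
  obtain ⟨y, hay, r1, hr1⟩ := Walk.not_nil_iff.mp h1
  obtain ⟨z, haz, r2, hr2⟩ := Walk.not_nil_iff.mp h2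
  refine ⟨y, z, ?_, hay, haz⟩
  intro h
  subst h
  have e1 : s(x, y) ∈ (p.takeUntil x hx).edges := by
    have : s(x, y) ∈ (p.takeUntil x hx).reverse.edges := by
      rw [hr1, Walk.edges_cons]; exact List.mem_cons_self
    rwa [Walk.edges_reverse, List.mem_reverse] at this
  have e2 : s(x, y) ∈ (p.dropUntil x hx).edges := by
    rw [hr2, Walk.edges_cons]; exact List.mem_cons_self
  have hnd : ((p.takeUntil x hx).edges ++ (p.dropUntil x hx).edges).Nodup := by
    rw [← Walk.edges_append, hspec]; exact hp.isTrail.edges_nodup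
  exact (List.disjoint_of_nodup_append hnd) e1 e2

lemma lift_walk {K : SimpleGraph V} {s : Set V} :
    ∀ {a b : V} (p : K.Walk a b) (hs : ∀ v ∈ p.support, v ∈ s) (ha : a ∈ s) (hb : b ∈ s),
      ∃ q : (K.induce s).Walk ⟨a, ha⟩ ⟨b, hb⟩,
        q.map (SimpleGraph.Embedding.induce s).toHom = p := by
  intro a b p
  induction p with
  | nil => exact fun _ _ _ => ⟨Walk.nil, rfl⟩
  | @cons a c b h p ih =>
    intro hs ha hb
    have hc : c ∈ s := hs c
      (by rw [Walk.support_cons]; exact List.mem_cons_of_mem _ p.start_mem_support)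
    obtain ⟨q, hq⟩ := ih
      (fun v hv => hs v (by rw [Walk.support_cons]; exact List.mem_cons_of_mem _ hv)) hc hb
    refine ⟨Walk.cons (by exact h : (K.induce s).Adj ⟨a, ha⟩ ⟨c, hc⟩) q, ?_⟩
    subst hq; rfl

variable {G : Type*} [Group G]

open Classical in
/-- attachment function: everything goes to `1`, except `p` which goes to `w`. -/
noncomputable def att (p w : G) : G → G := fun x => if x = p then w else 1

lemma att_pos (p w : G) : att p w p = w := by
  unfold att; rw [if_pos rfl]

lemma att_neg {p x : G} (w : G) (h : x ≠ p) : att p w x = 1 := by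
  unfold att; rw [if_neg h]

lemma att_one (x : G) : att (1 : G) 1 x = 1 := by
  unfold att; exact ite_self _

/-- extend a graph on `H` to a graph on `G` by attaching each outside vertex `x` to `f x`. -/
def F (H : Subgroup G) (f : G → G) (T : SimpleGraph ↥(H : Set G)) : SimpleGraph G where
  Adj a b := a ≠ b ∧ ((∃ (ha : a ∈ (H : Set G)) (hb : b ∈ (H : Set G)), T.Adj ⟨a, ha⟩ ⟨b, hb⟩)
    ∨ (a ∉ H ∧ b = f a) ∨ (b ∉ H ∧ a = f b))
  symm := by
    constructor
    rintro a b ⟨hne, h⟩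
    refine ⟨hne.symm, ?_⟩
    rcases h with ⟨ha, hb, h⟩ | h | h
    · exact Or.inl ⟨hb, ha, h.symm⟩
    · exact Or.inr (Or.inr h)
    · exact Or.inr (Or.inl h)
  loopless := ⟨fun a h => h.1 rfl⟩

lemma restrict_F (H : Subgroup G) (f : G → G) (T : SimpleGraph ↥(H : Set G)) :
    (F H f T).induce (H : Set G) = T := by
  ext a b
  simp only [comap_adj, Function.Embedding.coe_subtype]
  constructor
  · rintro ⟨hne, h⟩
    rcases h with ⟨ha, hb, h⟩ | ⟨ha, _⟩ | ⟨hb, _⟩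
    · exact h
    · exact absurd a.2 ha
    · exact absurd b.2 hb
  · intro h
    exact ⟨fun he => h.ne (Subtype.ext he), Or.inl ⟨a.2, b.2, h⟩⟩

lemma F_inj (H : Subgroup G) (f : G → G) : Function.Injective (F H f) := by
  intro T1 T2 h
  rw [← restrict_F H f T1, ← restrict_F H f T2, h]

lemma F_le {H : Subgroup G} {p w : G} (hpw : p ∉ H → (powerGraph G).Adj p w)
    {T : SimpleGraph ↥(H : Set G)} (hT : T ≤ (powerGraph G).induce (H : Set G)) :
    F H (att p w) T ≤ powerGraph G := by
  have key : ∀ x : G, x ∉ H → (powerGraph G).Adj x (att p w x) := by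
    intro x hx
    by_cases hxp : x = p
    · subst hxp; rw [att_pos]; exact hpw hx
    · rw [att_neg w hxp]
      exact ⟨fun h1 => hx (h1 ▸ H.one_mem), Or.inr (Subgroup.one_mem _)⟩
  rintro a b ⟨hne, h⟩
  rcases h with ⟨ha, hb, h⟩ | ⟨ha, rfl⟩ | ⟨hb, rfl⟩
  · exact hT h
  · exact key a ha
  · exact (key b hb).symm

/-- the hom from `T` into `F H f T`. -/
def FHom (H : Subgroup G) (f : G → G) (T : SimpleGraph ↥(H : Set G)) :
    T →g F H f T where
  toFun := Subtype.val
  map_rel' := by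
    intro u v h
    exact ⟨fun he => T.irrefl (Subtype.ext he ▸ h), Or.inl ⟨u.2, v.2, h⟩⟩

lemma F_connected {H : Subgroup G} {p w : G}
    (hpw : p ∉ H → (w ≠ p ∧ w ≠ 1 ∧ w ∉ H ∧ (powerGraph G).Adj p w))
    {T : SimpleGraph ↥(H : Set G)} (hT : T.Connected) :
    (F H (att p w) T).Connected := by
  have reach1 : ∀ a : G, (F H (att p w) T).Reachable a 1 := by
    have hout : ∀ a : G, a ∉ H → (F H (att p w) T).Adj a (att p w a) := by
      intro a ha
      refine ⟨?_, Or.inr (Or.inl ⟨ha, rfl⟩)⟩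
      by_cases hap : a = p
      · subst hap; rw [att_pos]; exact fun h => (hpw ha).1 h.symm
      · rw [att_neg w hap]; exact fun h => ha (h ▸ H.one_mem)
    intro a
    by_cases ha : a ∈ H
    · exact (hT.preconnected ⟨a, ha⟩ ⟨1, H.one_mem⟩).map (FHom H (att p w) T)
    · by_cases hap : a = p
      · subst hap
        obtain ⟨hwp, hw1, hwH, _⟩ := hpw ha
        have h1 : (F H (att a w) T).Adj a (att a w a) := hout a ha
        rw [att_pos] at h1
        have h2 : (F H (att a w) T).Adj w (att a w w) := hout w hwH
        rw [att_neg w hwp] at h2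
        exact (h1.reachable).trans h2.reachable
      · have h1 : (F H (att p w) T).Adj a (att p w a) := hout a ha
        rw [att_neg w hap] at h1
        exact h1.reachable
  haveI : Nonempty G := ⟨1⟩
  exact SimpleGraph.Connected.mk fun a b => (reach1 a).trans (reach1 b).symm

lemma F_acyclic {H : Subgroup G} {p w : G}
    (hpw : p ∉ H → (w ≠ p ∧ w ≠ 1 ∧ w ∉ H))
    {T : SimpleGraph ↥(H : Set G)} (hTa : T.IsAcyclic) :
    (F H (att p w) T).IsAcyclic := by
  intro v c hc
  have hsupp : ∀ x ∈ c.support, x ∈ (H : Set G) := by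
    by_contra hns
    push_neg at hns
    obtain ⟨x, hxs, hxH⟩ := hns
    have hxH : x ∉ H := hxH
    -- basic pendant analysis
    by_cases hp : p ∈ H
    · -- att is constantly 1 on the outside
      obtain ⟨y, z, hyz, _, _, hay, haz⟩ := cycle_two_nbrs hc hxs
      have hnbr : ∀ t, (F H (att p w) T).Adj x t → t = 1 := by
        rintro t ⟨hne, ⟨ha, _, _⟩ | ⟨_, rfl⟩ | ⟨htH, hxt⟩⟩
        · exact absurd ha hxH
        · exact att_neg w (fun h => hxH (h ▸ hp))
        · exfalso
          by_cases htp : t = p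
          · exact htH (htp ▸ hp)
          · rw [att_neg w htp] at hxt; exact hxH (hxt ▸ H.one_mem)
      exact hyz ((hnbr y hay).trans (hnbr z haz).symm)
    · obtain ⟨hwp, hw1, hwH⟩ := hpw hp
      have hpsupp : p ∉ c.support := by
        intro hps
        obtain ⟨y, z, hyz, _, _, hay, haz⟩ := cycle_two_nbrs hc hps
        have hnbr : ∀ t, (F H (att p w) T).Adj p t → t = w := by
          rintro t ⟨hne, ⟨ha, _, _⟩ | ⟨_, rfl⟩ | ⟨htH, hxt⟩⟩
          · exact absurd ha hp
          · exact att_pos p w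
          · exfalso
            by_cases htp : t = p
            · subst htp; rw [att_pos] at hxt; exact hwp hxt.symm
            · rw [att_neg w htp] at hxt; exact hp (hxt ▸ H.one_mem)
        exact hyz ((hnbr y hay).trans (hnbr z haz).symm)
      have hwsupp : w ∉ c.support := by
        intro hws
        obtain ⟨y, z, hyz, hys, hzs, hay, haz⟩ := cycle_two_nbrs hc hws
        have hnbr : ∀ t, t ∈ c.support → (F H (att p w) T).Adj w t → t = 1 := by
          rintro t hts ⟨hne, ⟨ha, _, _⟩ | ⟨_, rfl⟩ | ⟨htH, hxt⟩⟩
          · exact absurd ha hwH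
          · exact att_neg w hwp
          · exfalso
            by_cases htp : t = p
            · exact hpsupp (htp ▸ hts)
            · rw [att_neg w htp] at hxt; exact hw1 hxt
        exact hyz ((hnbr y hys hay).trans (hnbr z hzs haz).symm)
      have hxp : x ≠ p := fun h => hpsupp (h ▸ hxs)
      have hxw : x ≠ w := fun h => hwsupp (h ▸ hxs)
      obtain ⟨y, z, hyz, _, _, hay, haz⟩ := cycle_two_nbrs hc hxs
      have hnbr : ∀ t, (F H (att p w) T).Adj x t → t = 1 := by
        rintro t ⟨hne, ⟨ha, _, _⟩ | ⟨_, rfl⟩ | ⟨htH, hxt⟩⟩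
        · exact absurd ha hxH
        · exact att_neg w hxp
        · exfalso
          by_cases htp : t = p
          · subst htp; rw [att_pos] at hxt; exact hxw hxt
          · rw [att_neg w htp] at hxt; exact hxH (hxt ▸ H.one_mem)
      exact hyz ((hnbr y hay).trans (hnbr z haz).symm)
  obtain ⟨q, hq⟩ := lift_walk c hsupp (hsupp v c.start_mem_support) (hsupp v c.start_mem_support)
  have hinj : Function.Injective
      ⇑(SimpleGraph.Embedding.induce (G := F H (att p w) T) (H : Set G)).toHom :=
    fun a b hab => Subtype.ext hab
  have hmc : (q.map (SimpleGraph.Embedding.induce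
      (G := F H (att p w) T) (H : Set G)).toHom).IsCycle := by
    rw [hq]; exact hc
  have hqc : q.IsCycle := (Walk.map_isCycle_iff_of_injective hinj).mp hmc
  have hac : ((F H (att p w) T).induce (H : Set G)).IsAcyclic := by
    rw [restrict_F]; exact hTa
  exact hac q hqc

end TNAux

section Part2
open SimpleGraph Walk
variable {G : Type*} [Group G] {H : Subgroup G}

namespace TNAux

lemma pg_nbr (hsq : ∀ y : G, y ∉ H → y ^ 2 = 1) {x y : G} (hx : x ∉ H)
    (h : (powerGraph G).Adj x y) : y = 1 := by
  obtain ⟨hne, hmem | hmem⟩ := h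
  · exfalso
    obtain ⟨k, hk⟩ := Subgroup.mem_zpowers_iff.mp hmem
    by_cases hy : y ∈ H
    · exact hx (hk ▸ H.zpow_mem hy k)
    · have hyy : y * y = 1 := by have := hsq y hy; rwa [pow_two] at this
      rcases Int.even_or_odd k with ⟨m, hm⟩ | ⟨m, hm⟩
      · have hx1 : x = 1 := by
          rw [← hk, hm, show m + m = 2 * m from (two_mul m).symm, zpow_mul, zpow_two, hyy, one_zpow]
        exact hx (hx1 ▸ H.one_mem)
      · have hxy : x = y := by rw [← hk, hm, zpow_add, zpow_mul, zpow_two, hyy, one_zpow, one_mul, zpow_one]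
        exact hne hxy
  · obtain ⟨k, hk⟩ := Subgroup.mem_zpowers_iff.mp hmem
    have hxx : x * x = 1 := by have := hsq x hx; rwa [pow_two] at this
    rcases Int.even_or_odd k with ⟨m, hm⟩ | ⟨m, hm⟩
    · rw [← hk, hm, show m + m = 2 * m from (two_mul m).symm, zpow_mul, zpow_two, hxx, one_zpow]
    · exfalso
      have hyx : y = x := by
        rw [← hk, hm, zpow_add, zpow_mul, zpow_two, hxx, one_zpow, one_mul, zpow_one]
      exact hne hyx.symm

lemma pendant_adj (hsq : ∀ y : G, y ∉ H → y ^ 2 = 1) {T : SimpleGraph G}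
    (hle : T ≤ powerGraph G) (hconn : T.Connected) {x : G} (hx : x ∉ H) : T.Adj x 1 := by
  have hx1 : x ≠ 1 := fun h => hx (h ▸ H.one_mem)
  obtain ⟨wk⟩ := hconn.preconnected x 1
  have hnn : ¬ wk.Nil := Walk.not_nil_of_ne hx1
  obtain ⟨y, hay, q, hw⟩ := Walk.not_nil_iff.mp hnn
  have : y = 1 := pg_nbr hsq hx (hle hay)
  exact this ▸ hay

lemma F_res (hsq : ∀ y : G, y ∉ H → y ^ 2 = 1) {T : SimpleGraph G}
    (hle : T ≤ powerGraph G) (hconn : T.Connected) :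
    F H (att 1 1) (T.induce (H : Set G)) = T := by
  ext a b
  constructor
  · rintro ⟨hne, h⟩
    rcases h with ⟨ha, hb, h⟩ | ⟨ha, hb1⟩ | ⟨hb, ha1⟩
    · exact h
    · rw [hb1, att_one]
      exact pendant_adj hsq hle hconn ha
    · rw [ha1, att_one]
      exact (pendant_adj hsq hle hconn hb).symm
  · intro h
    refine ⟨h.ne, ?_⟩
    by_cases ha : a ∈ H
    · by_cases hb : b ∈ H
      · exact Or.inl ⟨ha, hb, h⟩
      · refine Or.inr (Or.inr ⟨hb, ?_⟩)
        rw [att_one]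
        exact pg_nbr hsq hb ((hle h).symm)
    · refine Or.inr (Or.inl ⟨ha, ?_⟩)
      rw [att_one]
      exact pg_nbr hsq ha (hle h)

lemma res_le {T : SimpleGraph G} (hle : T ≤ powerGraph G) :
    T.induce (H : Set G) ≤ (powerGraph G).induce (H : Set G) := by
  intro a b hab
  exact hle hab

lemma res_tree (hsq : ∀ y : G, y ∉ H → y ^ 2 = 1) {T : SimpleGraph G}
    (hle : T ≤ powerGraph G) (hT : T.IsTree) : (T.induce (H : Set G)).IsTree := by
  classical
  constructor
  · -- connected
    haveI : Nonempty ↥(H : Set G) := ⟨⟨1, H.one_mem⟩⟩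
    refine SimpleGraph.Connected.mk ?_
    intro a b
    obtain ⟨wk⟩ := hT.isConnected.preconnected (a : G) (b : G)
    have hp : wk.toPath.1.IsPath := wk.toPath.2
    have hsupp : ∀ v ∈ (wk.toPath.1).support, v ∈ (H : Set G) := by
      intro x hxs
      by_contra hxH
      have hxa : x ≠ (a : G) := fun h => hxH (h ▸ a.2)
      have hxb : x ≠ (b : G) := fun h => hxH (h ▸ b.2)
      obtain ⟨y, z, hyz, hay, haz⟩ := path_two_nbrs hp hxs hxa hxb
      exact hyz ((pg_nbr hsq hxH (hle hay)).trans (pg_nbr hsq hxH (hle haz)).symm)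
    obtain ⟨q, _⟩ := lift_walk (wk.toPath.1) hsupp a.2 b.2
    exact ⟨q⟩
  · -- acyclic
    intro v q hq
    have hinj : Function.Injective
        ⇑(SimpleGraph.Embedding.induce (G := T) (H : Set G)).toHom :=
      fun a b hab => Subtype.ext hab
    exact hT.IsAcyclic _ ((Walk.map_isCycle_iff_of_injective hinj).mpr hq)

lemma tn_eq (hsq : ∀ y : G, y ∉ H → y ^ 2 = 1) :
    treeNumber (powerGraph G) = treeNumber ((powerGraph G).induce (H : Set G)) := by
  unfold treeNumber
  apply Nat.card_congr
  have hpw1 : (1 : G) ∉ H → (powerGraph G).Adj 1 1 := fun h => absurd H.one_mem h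
  have hpw3 : (1 : G) ∉ H → ((1:G) ≠ 1 ∧ (1:G) ≠ 1 ∧ (1:G) ∉ H) := fun h => absurd H.one_mem h
  have hpw2 : (1 : G) ∉ H → ((1:G) ≠ 1 ∧ (1:G) ≠ 1 ∧ (1:G) ∉ H ∧ (powerGraph G).Adj 1 1) :=
    fun h => absurd H.one_mem h
  refine
    { toFun := fun T => ⟨(T.1).induce (H : Set G), res_le T.2.1, res_tree hsq T.2.1 T.2.2⟩
      invFun := fun T' => ⟨F H (att 1 1) T'.1, F_le hpw1 T'.2.1,
        ⟨F_connected hpw2 T'.2.2.isConnected, F_acyclic hpw3 T'.2.2.IsAcyclic⟩⟩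
      left_inv := fun T => Subtype.ext (F_res hsq T.2.1 T.2.2.isConnected)
      right_inv := fun T' => Subtype.ext (restrict_F H (att 1 1) T'.1) }

end TNAux
end Part2

section Part3
open SimpleGraph Walk

namespace TNAux

variable {G : Type*} [Group G] {H : Subgroup G}

def starH (H : Subgroup G) : SimpleGraph ↥(H : Set G) where
  Adj a b := a ≠ b ∧ (a = ⟨1, H.one_mem⟩ ∨ b = ⟨1, H.one_mem⟩)
  symm := ⟨fun a b h => ⟨h.1.symm, h.2.symm⟩⟩
  loopless := ⟨fun a h => h.1 rfl⟩

lemma starH_le : starH H ≤ (powerGraph G).induce (H : Set G) := by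
  rintro a b ⟨hne, h⟩
  have hvne : (a : G) ≠ (b : G) := fun hv => hne (Subtype.ext hv)
  rcases h with rfl | rfl
  · exact ⟨hvne, Or.inl (Subgroup.one_mem _)⟩
  · exact ⟨hvne, Or.inr (Subgroup.one_mem _)⟩

lemma starH_tree : (starH H).IsTree := by
  constructor
  · haveI : Nonempty ↥((H : Subgroup G) : Set G) := ⟨⟨1, H.one_mem⟩⟩
    refine SimpleGraph.Connected.mk ?_
    have h1 : ∀ a, (starH H).Reachable a ⟨1, H.one_mem⟩ := by
      intro a
      by_cases ha : a = ⟨1, H.one_mem⟩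
      · exact ha ▸ Reachable.refl _
      · exact SimpleGraph.Adj.reachable ⟨ha, Or.inr rfl⟩
    exact fun a b => (h1 a).trans (h1 b).symm
  · intro v c hc
    have hnbr : ∀ x, x ≠ (⟨1, H.one_mem⟩ : ↥(H : Set G)) →
        ∀ t, (starH H).Adj x t → t = ⟨1, H.one_mem⟩ := by
      rintro x hx t ⟨hne, h | h⟩
      · exact absurd h hx
      · exact h
    have hkill : ∀ x ∈ c.support, x = (⟨1, H.one_mem⟩ : ↥(H : Set G)) := by
      intro x hxs
      by_contra hx
      obtain ⟨y, z, hyz, _, _, hay, haz⟩ := cycle_two_nbrs hc hxs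
      exact hyz ((hnbr x hx y hay).trans (hnbr x hx z haz).symm)
    obtain ⟨y, z, hyz, hys, hzs, _, _⟩ := cycle_two_nbrs hc c.start_mem_support
    exact hyz ((hkill y hys).trans (hkill z hzs).symm)

lemma finite_simpleGraph {V : Type*} [Finite V] : Finite (SimpleGraph V) :=
  Finite.of_injective (fun K => K.Adj)
    (fun K₁ K₂ h => by ext u v; exact iff_of_eq (congrFun (congrFun h u) v))

lemma tn_lt [Finite G] (x0 : G) (hx0H : x0 ∉ H) (hx0 : x0 ^ 2 ≠ 1) :
    treeNumber ((powerGraph G).induce (H : Set G)) < treeNumber (powerGraph G) := by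
  haveI : Finite (SimpleGraph G) := finite_simpleGraph
  haveI : Finite (SimpleGraph ↥(H : Set G)) := finite_simpleGraph
  have hx0ne1 : x0 ≠ 1 := fun h => hx0H (h ▸ H.one_mem)
  have hinv_ne : x0⁻¹ ≠ x0 := by
    intro h
    apply hx0
    rw [pow_two]
    nth_rewrite 2 [← h]
    simp
  have hinv_ne1 : x0⁻¹ ≠ 1 := fun h => hx0ne1 (inv_eq_one.mp h)
  have hinvH : x0⁻¹ ∉ H := fun hm => hx0H (by simpa using H.inv_mem hm)
  have hadj : (powerGraph G).Adj x0 x0⁻¹ :=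
    ⟨fun h => hinv_ne h.symm, Or.inr (Subgroup.mem_zpowers_iff.mpr ⟨-1, by simp⟩)⟩
  have hpw : x0 ∉ H → (x0⁻¹ ≠ x0 ∧ x0⁻¹ ≠ 1 ∧ x0⁻¹ ∉ H ∧ (powerGraph G).Adj x0 x0⁻¹) :=
    fun _ => ⟨hinv_ne, hinv_ne1, hinvH, hadj⟩
  have hpw1 : (1 : G) ∉ H → (powerGraph G).Adj 1 1 := fun h => absurd H.one_mem h
  have hpw2 : (1 : G) ∉ H → ((1:G) ≠ 1 ∧ (1:G) ≠ 1 ∧ (1:G) ∉ H ∧ (powerGraph G).Adj 1 1) :=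
    fun h => absurd H.one_mem h
  have hpw3 : (1 : G) ∉ H → ((1:G) ≠ 1 ∧ (1:G) ≠ 1 ∧ (1:G) ∉ H) := fun h => absurd H.one_mem h
  set A := {T' : SimpleGraph ↥(H : Set G) //
    T' ≤ (powerGraph G).induce (H : Set G) ∧ T'.IsTree} with hA
  set B := {T : SimpleGraph G // T ≤ powerGraph G ∧ T.IsTree} with hB
  let J : A ⊕ A → B := Sum.elim
    (fun T' => ⟨F H (att 1 1) T'.1, F_le hpw1 T'.2.1,
      ⟨F_connected hpw2 T'.2.2.isConnected, F_acyclic hpw3 T'.2.2.IsAcyclic⟩⟩)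
    (fun T' => ⟨F H (att x0 x0⁻¹) T'.1, F_le (fun h => (hpw h).2.2.2) T'.2.1,
      ⟨F_connected hpw T'.2.2.isConnected,
        F_acyclic (fun h => ⟨(hpw h).1, (hpw h).2.1, (hpw h).2.2.1⟩) T'.2.2.IsAcyclic⟩⟩)
  have hcross : ∀ (T1 T2 : A), F H (att 1 1) T1.1 ≠ F H (att x0 x0⁻¹) T2.1 := by
    intro T1 T2 heq
    have hAdj : (F H (att 1 1) T1.1).Adj x0 1 :=
      ⟨hx0ne1, Or.inr (Or.inl ⟨hx0H, (att_one x0).symm⟩)⟩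
    rw [heq] at hAdj
    rcases hAdj with ⟨hne, ⟨ha, _, _⟩ | ⟨_, h1⟩ | ⟨h1H, _⟩⟩
    · exact hx0H ha
    · rw [att_pos] at h1
      exact hx0ne1 (inv_eq_one.mp h1.symm)
    · exact h1H H.one_mem
  have hJinj : Function.Injective J := by
    rintro (T1 | T1) (T2 | T2) h <;>
      simp only [J, Sum.elim_inl, Sum.elim_inr] at h <;>
      replace h := congrArg Subtype.val h
    · exact congrArg Sum.inl (Subtype.ext (F_inj H _ h))
    · exact absurd h (hcross T1 T2)
    · exact absurd h.symm (hcross T2 T1)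
    · exact congrArg Sum.inr (Subtype.ext (F_inj H _ h))
  have hcard : Nat.card (A ⊕ A) ≤ Nat.card B := Nat.card_le_card_of_injective J hJinj
  rw [Nat.card_sum] at hcard
  haveI : Nonempty A := ⟨⟨starH H, starH_le, starH_tree⟩⟩
  have hpos : 0 < Nat.card A := Nat.card_pos
  show Nat.card A < Nat.card B
  omega

end TNAux
end Part3

/-- For a proper subgroup `H` of a finite group `G`, `κ_P(G) = κ_P(H)` iff every
element `x` outside `H` is an involution inverting `H` by conjugation:
`x² = 1` and `x h x⁻¹ = h⁻¹` for all `h ∈ H`. -/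
theorem treeNumber_powerGraph_eq_iff {G : Type*} [Group G] [Finite G]
    (H : Subgroup G) (hH : H ≠ ⊤) :
    treeNumber (powerGraph G) = treeNumber ((powerGraph G).induce (H : Set G)) ↔
      ∀ x : G, x ∉ H → x ^ 2 = 1 ∧ ∀ h ∈ H, x * h * x⁻¹ = h⁻¹ := by
  constructor
  · intro heq
    have hsq : ∀ y : G, y ∉ H → y ^ 2 = 1 := by
      by_contra hns
      push_neg at hns
      obtain ⟨x0, hx0H, hx0⟩ := hns
      have hlt := TNAux.tn_lt (H := H) x0 hx0H hx0
      omega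
    intro x hx
    refine ⟨hsq x hx, ?_⟩
    intro h hh
    have hxh : x * h ∉ H := fun hm => hx (by simpa using H.mul_mem hm (H.inv_mem hh))
    have h1 : x * x = 1 := by have := hsq x hx; rwa [pow_two] at this
    have h2 : x * h * (x * h) = 1 := by have := hsq _ hxh; rwa [pow_two] at this
    have hxinv : x⁻¹ = x := inv_eq_of_mul_eq_one_right h1
    rw [hxinv]
    have h3 : (x * h * x) * h = 1 := by rw [← h2]; group
    exact eq_inv_of_mul_eq_one_left h3
  · intro hbig
    exact TNAux.tn_eq (fun y hy => (hbig y hy).1)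
end

section
/- Let G be a finite group with an n-power-free decomposition G = C ⊎ B_1 ⊎ ⋯ ⊎ B_n, where C is a cyclic p-subgroup. Then: (i) for every b ∈ G \ C, φ(o(b)) ≤ n, where o(b) is the order of b and φ is Euler's totient function; (ii) every prime q dividing |G| satisfies q ≤ n+1 or q = p, i.e. π(G) ⊆ π((n+1)!) ∪ {p}. -/
/-- `IsNPowerFreeDecomposition p C n B` says that the group `G` is partitioned as
`G = C ⊎ B 0 ⊎ ⋯ ⊎ B (n-1)`, where `C` is a cyclic subgroup of prime-power order
`p ^ m` which is of maximal order among the cyclic subgroups of prime-power order in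
`G`, and each `B i` is an independent set of the power graph `P(G)` with `|B i| > 1`. -/
def IsNPowerFreeDecomposition {G : Type*} [Group G] (p : ℕ) (C : Subgroup G)
    (n : ℕ) (B : Fin n → Set G) : Prop :=
  p.Prime ∧ IsCyclic C ∧ (∃ m : ℕ, Nat.card C = p ^ m) ∧
    (∀ (q : ℕ) (D : Subgroup G), q.Prime → IsCyclic D → (∃ k : ℕ, Nat.card D = q ^ k) →
      Nat.card D ≤ Nat.card C) ∧
    (∀ i, 1 < (B i).ncard) ∧
    (∀ i, ∀ x ∈ B i, ∀ y ∈ B i, x ≠ y → ¬ (powerGraph G).Adj x y) ∧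
    ((C : Set G) ∪ ⋃ i, B i) = Set.univ ∧
    (∀ i, Disjoint (C : Set G) (B i)) ∧
    Pairwise fun i j => Disjoint (B i) (B j)

/-- If a finite group `G` has an `n`-power-free decomposition `G = C ⊎ B₁ ⊎ ⋯ ⊎ Bₙ`
with `C` a cyclic `p`-subgroup, then (i) `φ(o(b)) ≤ n` for every `b ∉ C`, and
(ii) every prime `q` dividing `|G|` satisfies `q ≤ n + 1` or `q = p`. -/
theorem nPowerFreeDecomposition_totient_le {G : Type*} [Group G] [Finite G]
    (p : ℕ) (C : Subgroup G) (n : ℕ) (hn : 1 ≤ n) (B : Fin n → Set G)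
    (hdec : IsNPowerFreeDecomposition p C n B) :
    (∀ b : G, b ∉ C → Nat.totient (orderOf b) ≤ n) ∧
      (∀ q : ℕ, q.Prime → q ∣ Nat.card G → q ≤ n + 1 ∨ q = p) := by
  classical
  obtain ⟨hp, -, ⟨m, hm⟩, -, -, hindep, hcover, hCB, -⟩ := hdec
  have key : ∀ b : G, b ∉ C → Nat.totient (orderOf b) ≤ n := by
    intro b hb
    have hgen : ∀ k : ℕ, Nat.Coprime k (orderOf b) → b ∈ Subgroup.zpowers (b ^ k) := by
      intro k hk
      obtain ⟨m, hm⟩ := exists_pow_eq_self_of_coprime hk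
      exact ⟨m, by simpa using hm⟩
    set T : Finset ℕ := {a ∈ Finset.range (orderOf b) | (orderOf b).Coprime a} with hT
    have hTcard : T.card = Nat.totient (orderOf b) := (Nat.totient_eq_card_coprime _).symm
    set S : Finset G := T.image (b ^ ·) with hS
    have hScard : S.card = Nat.totient (orderOf b) := by
      rw [hS, Finset.card_image_of_injOn, hTcard]
      intro i hi j hj hij
      have hi' : i < orderOf b := Finset.mem_range.1 (Finset.mem_filter.1 hi).1
      have hj' : j < orderOf b := Finset.mem_range.1 (Finset.mem_filter.1 hj).1
      exact pow_injOn_Iio_orderOf hi' hj' hij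
    have hSgen : ∀ x ∈ S, b ∈ Subgroup.zpowers x ∧ x ∈ Subgroup.zpowers b := by
      intro x hx
      obtain ⟨k, hk, rfl⟩ := Finset.mem_image.1 hx
      have hk' : (orderOf b).Coprime k := (Finset.mem_filter.1 hk).2
      exact ⟨hgen k hk'.symm, ⟨(k : ℤ), by simp⟩⟩
    have hSnC : ∀ x ∈ S, x ∉ (C : Set G) := by
      intro x hx hxC
      exact hb (Subgroup.zpowers_le.2 hxC (hSgen x hx).1)
    -- every element of S lies in some B i
    have hSB : ∀ x ∈ S, ∃ i, x ∈ B i := by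
      intro x hx
      have : x ∈ (C : Set G) ∪ ⋃ i, B i := hcover ▸ Set.mem_univ x
      rcases this with h | h
      · exact absurd h (hSnC x hx)
      · simpa using h
    set f : G → Fin n := fun x => if h : ∃ i, x ∈ B i then h.choose else ⟨0, hn⟩ with hf
    have hfB : ∀ x ∈ S, x ∈ B (f x) := by
      intro x hx
      have h := hSB x hx
      simp only [hf, dif_pos h]
      exact h.choose_spec
    have hcard : S.card ≤ n := by
      have := Finset.card_le_card_of_injOn (s := S) (t := Finset.univ) f (fun x _ => Finset.mem_univ (f x)) ?_
      · simpa using this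
      · intro x hx y hy hxy
        by_contra hne
        have hadj : (powerGraph G).Adj x y := by
          refine ⟨hne, Or.inr ?_⟩
          exact Subgroup.zpowers_le.2 (hSgen x hx).1 (hSgen y hy).2
        exact hindep (f x) x (hfB x hx) y (hxy ▸ hfB y hy) hne hadj
    omega
  refine ⟨key, fun q hq hdvd => ?_⟩
  haveI : Fact q.Prime := ⟨hq⟩
  obtain ⟨g, hg⟩ := exists_prime_orderOf_dvd_card' q hdvd
  by_cases hgC : g ∈ C
  · right
    have h1 : orderOf (⟨g, hgC⟩ : C) = q := by rw [← hg]; exact Subgroup.orderOf_mk g hgC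
    have h2 : q ∣ p ^ m := by rw [← h1, ← hm]; exact orderOf_dvd_natCard _
    exact (Nat.prime_dvd_prime_iff_eq hq hp).1 (hq.dvd_of_dvd_pow h2)
  · left
    have := key g hgC
    rw [hg, Nat.totient_prime hq] at this
    have := hq.two_le
    omega
end

section
/- Let G be a finite group with an n-power-free decomposition G = C ⊎ B_1 ⊎ ⋯ ⊎ B_n, where C is a cyclic p-subgroup, and suppose p > n + 1 (equivalently, p ∉ π((n+1)!)). Then C is a normal subgroup of G; for every b ∈ G \ C no nontrivial element of C commutes with b (i.e. C_C(b) = {1}); and the center of G is trivial, Z(G) = {1}. -/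
section Aux

variable {G : Type*} [Group G]

/-- If `gcd i (orderOf x)` divides `j`, then `x ^ j` is a power of `x ^ i`. -/
private lemma zpow_mem_zpowers_zpow {x : G} {i j : ℤ}
    (h : (Int.gcd i (orderOf x) : ℤ) ∣ j) : x ^ j ∈ Subgroup.zpowers (x ^ i) := by
  obtain ⟨u, rfl⟩ := h
  set N : ℤ := (orderOf x : ℤ)
  set A : ℤ := Int.gcdA i N
  set Bz : ℤ := Int.gcdB i N
  have hb : (Int.gcd i N : ℤ) = i * A + N * Bz := Int.gcd_eq_gcd_ab i N
  refine Subgroup.mem_zpowers_iff.mpr ⟨A * u, ?_⟩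
  have hxo : x ^ N = 1 := by
    rw [zpow_natCast, pow_orderOf_eq_one]
  have key : (Int.gcd i N : ℤ) * u = i * (A * u) + N * (Bz * u) := by rw [hb]; ring
  rw [← zpow_mul, key, zpow_add, zpow_mul x N (Bz * u), hxo, one_zpow, mul_one]

/-- Any two elements of a cyclic group of prime power order are comparable in the
power graph sense. -/
private lemma zpowers_comparable {pp k : ℕ} (hpp : pp.Prime) {b x y : G}
    (hb : orderOf b = pp ^ k)
    (hx : x ∈ Subgroup.zpowers b) (hy : y ∈ Subgroup.zpowers b) :
    x ∈ Subgroup.zpowers y ∨ y ∈ Subgroup.zpowers x := by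
  obtain ⟨i, rfl⟩ := Subgroup.mem_zpowers_iff.mp hx
  obtain ⟨j, rfl⟩ := Subgroup.mem_zpowers_iff.mp hy
  have hiN : Int.gcd i (orderOf b) ∣ pp ^ k := by
    have h0 : (Int.gcd i (orderOf b) : ℤ) ∣ (orderOf b : ℤ) := Int.gcd_dvd_right _ _
    exact (Int.natCast_dvd_natCast.mp h0).trans (dvd_of_eq hb)
  have hjN : Int.gcd j (orderOf b) ∣ pp ^ k := by
    have h0 : (Int.gcd j (orderOf b) : ℤ) ∣ (orderOf b : ℤ) := Int.gcd_dvd_right _ _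
    exact (Int.natCast_dvd_natCast.mp h0).trans (dvd_of_eq hb)
  obtain ⟨a, _, ha⟩ := (Nat.dvd_prime_pow hpp).mp hiN
  obtain ⟨c, _, hc⟩ := (Nat.dvd_prime_pow hpp).mp hjN
  rcases le_total a c with h | h
  · right
    refine zpow_mem_zpowers_zpow ?_
    have h1 : Int.gcd i (orderOf b) ∣ Int.gcd j (orderOf b) := by
      rw [ha, hc]; exact pow_dvd_pow pp h
    exact (Int.natCast_dvd_natCast.mpr h1).trans (Int.gcd_dvd_left _ _)
  · left
    refine zpow_mem_zpowers_zpow ?_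
    have h1 : Int.gcd j (orderOf b) ∣ Int.gcd i (orderOf b) := by
      rw [ha, hc]; exact pow_dvd_pow pp h
    exact (Int.natCast_dvd_natCast.mpr h1).trans (Int.gcd_dvd_left _ _)

/-- Order of `g ^ (orderOf g / q)` for `q` dividing the order. -/
private lemma orderOf_pow_div [Finite G] {g : G} {q : ℕ} (h : q ∣ orderOf g) :
    orderOf (g ^ (orderOf g / q)) = q := by
  rw [orderOf_pow, Nat.gcd_eq_right (Nat.div_dvd_of_dvd h),
    Nat.div_div_self h (orderOf_pos g).ne']

end Aux

/-- If a finite group `G` has an `n`-power-free decomposition `G = C ⊎ B₁ ⊎ ⋯ ⊎ Bₙ`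
with `C` a cyclic `p`-subgroup and `p > n + 1`, then `C` is normal, no nontrivial
element of `C` commutes with any element outside `C`, and the center of `G` is
trivial. -/
theorem nPowerFreeDecomposition_of_large_p {G : Type*} [Group G] [Finite G]
    (p : ℕ) (C : Subgroup G) (n : ℕ) (hn : 1 ≤ n) (B : Fin n → Set G)
    (hdec : IsNPowerFreeDecomposition p C n B) (hp : n + 1 < p) :
    C.Normal ∧ (∀ b : G, b ∉ C → ∀ c ∈ C, c * b = b * c → c = 1) ∧
      Subgroup.center G = ⊥ := by
  classical
  obtain ⟨hpp, hcyc, ⟨m, hm⟩, hmax, hB1, hBind, hcover, hdisjC, hdisjB⟩ := hdec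
  haveI : Nonempty (Fin n) := ⟨⟨0, hn⟩⟩
  -- Any clique of the power graph disjoint from C has at most n elements.
  have cliqueBound : ∀ K : Set G, (∀ x ∈ K, x ∉ C) →
      (∀ x ∈ K, ∀ y ∈ K, x ≠ y → (powerGraph G).Adj x y) → K.ncard ≤ n := by
    intro K hKC hKadj
    have hex : ∀ x ∈ K, ∃ i, x ∈ B i := by
      intro x hx
      have hxu : x ∈ (C : Set G) ∪ ⋃ i, B i := by rw [hcover]; exact Set.mem_univ x
      rcases hxu with h | h
      · exact absurd h (hKC x hx)
      · simpa using h
    set f : G → Fin n := fun x => if h : ∃ i, x ∈ B i then h.choose else Classical.arbitrary _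
      with hfdef
    have hfB : ∀ x ∈ K, x ∈ B (f x) := by
      intro x hx
      have h := hex x hx
      show x ∈ B (if h : ∃ i, x ∈ B i then h.choose else Classical.arbitrary _)
      rw [dif_pos h]
      exact h.choose_spec
    have hinj : Set.InjOn f K := by
      intro x hx y hy hxy
      by_contra hne
      exact hBind (f x) x (hfB x hx) y (hxy ▸ hfB y hy) hne (hKadj x hx y hy hne)
    calc K.ncard ≤ (Set.univ : Set (Fin n)).ncard :=
          Set.ncard_le_ncard_of_injOn f (fun a _ => Set.mem_univ _) hinj Set.finite_univ
      _ = n := by simp [Set.ncard_univ]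
  -- Every element of p-power order lies in C.
  have hL : ∀ (b : G) (k : ℕ), orderOf b = p ^ k → b ∈ C := by
    intro b k hbk
    by_contra hbC
    have hb1 : b ≠ 1 := fun h => hbC (h ▸ C.one_mem)
    have hk : 1 ≤ k := by
      by_contra h
      have hk0 : k = 0 := by omega
      rw [hk0, pow_zero] at hbk
      exact hb1 (orderOf_eq_one_iff.mp hbk)
    set Z : Subgroup G := Subgroup.zpowers b with hZdef
    set D : Subgroup G := Z ⊓ C with hDdef
    have hDle : D ≤ Z := inf_le_left
    have hDdvd : Nat.card D ∣ p ^ k := by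
      have := Subgroup.card_dvd_of_le hDle
      rwa [Nat.card_zpowers, hbk] at this
    obtain ⟨j, hjk, hDcard⟩ := (Nat.dvd_prime_pow hpp).mp hDdvd
    have hjlt : j < k := by
      rcases lt_or_eq_of_le hjk with h | rfl
      · exact h
      · exfalso
        have hDZ : D = Z := Subgroup.eq_of_le_of_card_ge hDle
          (by rw [hDcard, Nat.card_zpowers, hbk])
        have hbD : b ∈ D := hDZ ▸ Subgroup.mem_zpowers b
        exact hbC (Subgroup.mem_inf.mp hbD).2
    set K : Set G := (Z : Set G) \ C with hKdef
    have hKC : ∀ x ∈ K, x ∉ C := fun x hx => hx.2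
    have hKadj : ∀ x ∈ K, ∀ y ∈ K, x ≠ y → (powerGraph G).Adj x y := by
      intro x hx y hy hne
      exact ⟨hne, zpowers_comparable hpp hbk hx.1 hy.1⟩
    have hbound := cliqueBound K hKC hKadj
    have hKcard : K.ncard = p ^ k - p ^ j := by
      have h1 : K = (Z : Set G) \ (D : Set G) := by
        rw [hKdef, hDdef, Subgroup.coe_inf, Set.diff_self_inter]
      rw [h1, Set.ncard_diff (by exact_mod_cast hDle) (Set.toFinite _)]
      have h2 : (Z : Set G).ncard = p ^ k := by
        rw [← Nat.card_coe_set_eq]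
        have : Nat.card (Z : Set G) = Nat.card Z := rfl
        rw [this, Nat.card_zpowers, hbk]
      have h3 : (D : Set G).ncard = p ^ j := by
        rw [← Nat.card_coe_set_eq]
        have : Nat.card (D : Set G) = Nat.card D := rfl
        rw [this, hDcard]
      rw [h2, h3]
    rw [hKcard] at hbound
    -- p ^ k - p ^ j ≥ p - 1 > n, contradiction
    have ha : 1 ≤ p ^ (k - 1) := Nat.one_le_pow _ _ hpp.pos
    have hkk : p ^ k = p ^ (k - 1) * p := by
      rw [← pow_succ, Nat.sub_add_cancel hk]
    have hj' : p ^ j ≤ p ^ (k - 1) := Nat.pow_le_pow_right hpp.pos (by omega)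
    have hfinal : p - 1 ≤ p ^ k - p ^ j := by
      have h5 : p ^ k - p ^ (k - 1) ≤ p ^ k - p ^ j := Nat.sub_le_sub_left hj' _
      have h6 : p ^ (k - 1) * (p - 1) = p ^ k - p ^ (k - 1) := by
        rw [Nat.mul_sub, mul_one, ← hkk]
      have h7 : 1 * (p - 1) ≤ p ^ (k - 1) * (p - 1) := Nat.mul_le_mul_right _ ha
      omega
    omega
  -- No nontrivial element of C commutes with an element outside C.
  have hM : ∀ b : G, b ∉ C → ∀ c ∈ C, c * b = b * c → c = 1 := by
    intro b hbC c hcC hcomm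
    by_contra hc1
    have hcdvd : orderOf c ∣ p ^ m := hm ▸ Subgroup.orderOf_dvd_natCard C hcC
    obtain ⟨j, hjm, hcj⟩ := (Nat.dvd_prime_pow hpp).mp hcdvd
    have hj1 : 1 ≤ j := by
      by_contra h
      have : j = 0 := by omega
      rw [this, pow_zero] at hcj
      exact hc1 (orderOf_eq_one_iff.mp hcj)
    have hpdvd : p ∣ orderOf c := by
      rw [hcj]
      exact dvd_pow_self p (by omega)
    set d : G := c ^ (orderOf c / p) with hddef
    have hd : orderOf d = p := orderOf_pow_div hpdvd
    -- find a prime q ≠ p dividing orderOf b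
    obtain ⟨q, hq, hqdvd, hqp⟩ : ∃ q, Nat.Prime q ∧ q ∣ orderOf b ∧ q ≠ p := by
      by_contra h
      push_neg at h
      have heq : ∀ {r : ℕ}, Nat.Prime r → r ∣ orderOf b → r = p := by
        intro r hr hrd
        by_contra hrp
        exact hrp (by_contra fun h' => h' (by tauto))
      have := Nat.eq_prime_pow_of_unique_prime_dvd (orderOf_pos b).ne' heq
      exact hbC (hL b _ this)
    set w : G := b ^ (orderOf b / q) with hwdef
    have hw : orderOf w = q := orderOf_pow_div hqdvd
    have hcb : Commute c b := hcomm
    have hdw : Commute d w := (hcb.pow_pow _ _)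
    set x : G := d * w with hxdef
    have hcop : Nat.Coprime (orderOf d) (orderOf w) := by
      rw [hd, hw]
      exact (Nat.coprime_primes hpp hq).mpr (Ne.symm hqp)
    have hx : orderOf x = p * q := by
      rw [hxdef, hdw.orderOf_mul_eq_mul_orderOf_of_coprime hcop, hd, hw]
    -- clique of generators of ⟨x⟩
    set S : Finset ℕ := (Finset.range (p * q)).filter ((p * q).Coprime) with hSdef
    set K : Set G := (fun i => x ^ i) '' (S : Set ℕ) with hKdef
    have hmemS : ∀ i ∈ S, Nat.Coprime (p * q) i := by
      intro i hi
      exact (Finset.mem_filter.mp hi).2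
    have hordxi : ∀ i ∈ S, orderOf (x ^ i) = p * q := by
      intro i hi
      rw [orderOf_pow, hx, (hmemS i hi).gcd_eq_one, Nat.div_one]
    have hKC : ∀ z ∈ K, z ∉ C := by
      rintro z ⟨i, hi, rfl⟩ hzC
      have h1 : orderOf (x ^ i) ∣ p ^ m := hm ▸ Subgroup.orderOf_dvd_natCard C hzC
      rw [hordxi i hi] at h1
      have h2 : q ∣ p ^ m := (Dvd.intro_left p rfl).trans h1
      exact hqp ((Nat.prime_dvd_prime_iff_eq hq hpp).mp (hq.dvd_of_dvd_pow h2))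
    have hKadj : ∀ z₁ ∈ K, ∀ z₂ ∈ K, z₁ ≠ z₂ → (powerGraph G).Adj z₁ z₂ := by
      rintro z₁ ⟨i, hi, rfl⟩ z₂ ⟨j', hj', rfl⟩ hne
      refine ⟨hne, Or.inl ?_⟩
      have hgcd : Int.gcd (j' : ℤ) (orderOf x) = 1 := by
        rw [Int.gcd_natCast_natCast, hx]
        exact Nat.Coprime.gcd_eq_one (Nat.coprime_comm.mp (hmemS j' hj'))
      have := zpow_mem_zpowers_zpow (x := x) (i := (j' : ℤ)) (j := (i : ℤ))
        (by rw [hgcd]; exact one_dvd _)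
      simpa [← zpow_natCast] using this
    have hbound := cliqueBound K hKC hKadj
    have hKcard : K.ncard = (p - 1) * (q - 1) := by
      have hinj : Set.InjOn (fun i => x ^ i) (S : Set ℕ) := by
        intro i hi j' hj' hij
        have hi' : i < orderOf x := by
          rw [hx]; exact Finset.mem_range.mp (Finset.mem_filter.mp hi).1
        have hj'' : j' < orderOf x := by
          rw [hx]; exact Finset.mem_range.mp (Finset.mem_filter.mp hj').1
        exact pow_injOn_Iio_orderOf hi' hj'' hij
      rw [hKdef, Set.ncard_image_of_injOn hinj, Set.ncard_coe_finset]
      have : S.card = Nat.totient (p * q) := by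
        rw [Nat.totient_eq_card_coprime]
      rw [this, Nat.totient_mul ((Nat.coprime_primes hpp hq).mpr (Ne.symm hqp)),
        Nat.totient_prime hpp, Nat.totient_prime hq]
    rw [hKcard] at hbound
    have hq2 : 2 ≤ q := hq.two_le
    have : p - 1 ≤ (p - 1) * (q - 1) := Nat.le_mul_of_pos_right _ (by omega)
    omega
  refine ⟨?_, hM, ?_⟩
  · -- normality
    constructor
    intro c hc g
    obtain ⟨j, _, hcj⟩ := (Nat.dvd_prime_pow hpp).mp
      (hm ▸ Subgroup.orderOf_dvd_natCard C hc)
    apply hL _ j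
    rw [← hcj]
    have := orderOf_injective (MulAut.conj g).toMonoidHom (MulEquiv.injective _) c
    simpa using this
  · -- trivial center
    rw [eq_bot_iff]
    intro z hz
    rw [Subgroup.mem_bot]
    by_cases hzC : z ∈ C
    · -- pick an element outside C
      have hne : (B ⟨0, hn⟩).Nonempty := by
        apply Set.nonempty_of_ncard_ne_zero
        have := hB1 ⟨0, hn⟩
        omega
      obtain ⟨b, hb⟩ := hne
      have hbC : b ∉ C := fun h => Set.disjoint_left.mp (hdisjC ⟨0, hn⟩) h hb
      exact hM b hbC z hzC ((Subgroup.mem_center_iff.mp hz b).symm)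
    · -- z outside C commutes with a nontrivial element of C
      rcases Subgroup.bot_or_exists_ne_one C with hbot | ⟨c, hcC, hc1⟩
      · exfalso
        -- C = ⊥ contradicts maximality since G is nontrivial
        obtain ⟨a, b, ha, hb, hab⟩ := (Set.one_lt_ncard_iff (Set.toFinite _)).mp (hB1 ⟨0, hn⟩)
        haveI : Nontrivial G := ⟨⟨a, b, hab⟩⟩
        obtain ⟨g, hg1⟩ := exists_ne (1 : G)
        have hg0 : orderOf g ≠ 1 := fun h => hg1 (orderOf_eq_one_iff.mp h)
        set q0 : ℕ := (orderOf g).minFac with hq0def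
        have hq0 : Nat.Prime q0 := Nat.minFac_prime hg0
        set h : G := g ^ (orderOf g / q0) with hhdef
        have hh : orderOf h = q0 := orderOf_pow_div (Nat.minFac_dvd _)
        have hcyc' : IsCyclic (Subgroup.zpowers h) :=
          ⟨⟨⟨h, Subgroup.mem_zpowers h⟩, by
            rintro ⟨y, hy⟩
            obtain ⟨k, hk⟩ := Subgroup.mem_zpowers_iff.mp hy
            exact ⟨k, by ext; simpa using hk⟩⟩⟩
        have hcard : Nat.card (Subgroup.zpowers h) = q0 ^ 1 := by
          rw [Nat.card_zpowers, hh, pow_one]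
        have := hmax q0 (Subgroup.zpowers h) hq0 hcyc' ⟨1, hcard⟩
        rw [hcard, pow_one, hbot, Subgroup.card_bot] at this
        exact absurd this (by have := hq0.two_le; omega)
      · exact absurd (hM z hzC c hcC (Subgroup.mem_center_iff.mp hz c)) hc1
end

section
/- No finite cyclic group has an n-power-free decomposition for any integer n ≥ 1. -/
/-- No finite cyclic group has an `n`-power-free decomposition for any `n ≥ 1`. -/
theorem cyclic_no_nPowerFreeDecomposition {G : Type*} [Group G] [Finite G]
    (hG : IsCyclic G) :
    ∀ (n : ℕ), 1 ≤ n → ∀ (p : ℕ) (C : Subgroup G) (B : Fin n → Set G),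
      ¬ IsNPowerFreeDecomposition p C n B := by
  intro n hn p C B h
  obtain ⟨-, -, -, -, hcard, hindep, hcover, hdisj, -⟩ := h
  obtain ⟨g, hg⟩ := hG.exists_generator
  -- the generator must lie in C
  have hgC : g ∈ C := by
    have : g ∈ ((C : Set G) ∪ ⋃ i, B i) := by rw [hcover]; trivial
    rcases this with h1 | h1
    · exact h1
    · exfalso
      obtain ⟨i, hi⟩ := Set.mem_iUnion.mp h1
      obtain ⟨x, hx, hxg⟩ := Set.exists_ne_of_one_lt_ncard (hcard i) g
      exact hindep i g hi x hx hxg.symm ⟨hxg.symm, Or.inr (hg x)⟩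
  -- hence C = ⊤
  have hC : (C : Set G) = Set.univ := by
    have : C = ⊤ := by
      rw [eq_top_iff]
      intro x _
      obtain ⟨k, hk⟩ := Subgroup.mem_zpowers_iff.mp (hg x)
      exact hk ▸ zpow_mem hgC k
    simp [this]
  -- so B 0 is empty, contradicting its size
  have i0 : Fin n := ⟨0, hn⟩
  have hempty : B i0 = ∅ := by
    have := hdisj i0
    rw [hC] at this
    simpa using this.symm.eq_bot_of_le le_top
  have := hcard i0
  rw [hempty] at this
  simp at this
end

section
/- For every integer n ≥ 3, the generalized quaternion group Q_{2^n} of order 2^n has a 2-power-free decomposition: Q_{2^n} = C ⊎ B_1 ⊎ B_2, where C is the cyclic subgroup of order 2^{n−1} generated by an element x of maximal order, B_1 = {y, xy, …, x^{2^{n−2}−1}y} and B_2 = {x^{2^{n−2}}y, …, x^{2^{n−1}−1}y} for an element y outside C. -/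
namespace QGaux

open QuaternionGroup

variable {m : ℕ}

lemma a_inv (i : ZMod (2 * m)) : (a i : QuaternionGroup m)⁻¹ = a (-i) := rfl

lemma a_one_zpow (k : ℤ) : (a 1 : QuaternionGroup m) ^ k = a (k : ZMod (2 * m)) := by
  cases k with
  | ofNat k =>
    rw [Int.ofNat_eq_coe, zpow_natCast, a_one_pow]
    norm_cast
  | negSucc k =>
    rw [zpow_negSucc, a_one_pow, a_inv]
    congr 1
    rw [Int.cast_negSucc]

lemma mem_zpowers_a_one_iff [NeZero m] (x : QuaternionGroup m) :
    x ∈ Subgroup.zpowers (a 1 : QuaternionGroup m) ↔ ∃ j, x = a j := by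
  haveI : NeZero (2 * m) := ⟨by have := NeZero.pos m; omega⟩
  constructor
  · rintro ⟨k, rfl⟩
    exact ⟨(k : ZMod (2 * m)), a_one_zpow k⟩
  · rintro ⟨j, rfl⟩
    exact Subgroup.mem_zpowers_iff.mpr ⟨(j.val : ℤ),
      by rw [a_one_zpow, Int.cast_natCast, ZMod.natCast_zmod_val]⟩

lemma neg_m_eq (hm : 0 < m) : -(m : ZMod (2 * m)) = (m : ZMod (2 * m)) := by
  have h : ((2 * m : ℕ) : ZMod (2 * m)) = 0 := ZMod.natCast_self _
  push_cast at h
  linear_combination -h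

lemma xa_mem_zpowers_xa {i j : ZMod (2 * m)} [NeZero m]
    (h : xa i ∈ Subgroup.zpowers (xa j : QuaternionGroup m)) :
    i = j ∨ i = j + m := by
  obtain ⟨k, hk⟩ := Subgroup.mem_zpowers_iff.mp h
  rw [← zpow_mod_orderOf, orderOf_xa] at hk
  have h0 : (0 : ℤ) ≤ k % (4 : ℕ) := Int.emod_nonneg k (by norm_num)
  have h4 : k % (4 : ℕ) < 4 := Int.emod_lt_of_pos k (by norm_num)
  have hkc : k % (4 : ℕ) = ((k % (4 : ℕ)).toNat : ℤ) := (Int.toNat_of_nonneg h0).symm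
  set c := (k % (4 : ℕ)).toNat with hc
  rw [hkc, zpow_natCast] at hk
  have hc4 : c < 4 := by omega
  interval_cases c
  · rw [pow_zero, one_def] at hk
    exact absurd hk (by intro h; cases h)
  · rw [pow_one] at hk
    exact Or.inl (xa.inj hk).symm
  · rw [xa_sq] at hk
    exact absurd hk (by simp)
  · rw [show (3 : ℕ) = 2 + 1 by norm_num, pow_succ, xa_sq, a_mul_xa] at hk
    right
    rw [← xa.inj hk, sub_eq_add_neg, neg_m_eq (NeZero.pos m)]

lemma orderOf_le (hm : 2 ≤ m) (g : QuaternionGroup m) : orderOf g ≤ 2 * m := by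
  haveI : NeZero m := ⟨by omega⟩
  cases g with
  | a i =>
    rw [orderOf_a]
    exact Nat.div_le_self _ _
  | xa i =>
    rw [orderOf_xa]
    omega

lemma val_add_m_of_lt {j : ZMod (2 * m)} [NeZero m] (h : j.val < m) :
    (j + (m : ZMod (2 * m))).val = j.val + m := by
  have hne : NeZero (2 * m) := ⟨by have := NeZero.pos m; omega⟩
  have hmval : ((m : ℕ) : ZMod (2 * m)).val = m := by
    rw [ZMod.val_natCast, Nat.mod_eq_of_lt (by have := NeZero.pos m; omega)]
  rw [ZMod.val_add, hmval, Nat.mod_eq_of_lt (by omega)]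

lemma val_add_m_of_ge {j : ZMod (2 * m)} [NeZero m] (h : m ≤ j.val) :
    (j + (m : ZMod (2 * m))).val = j.val - m := by
  have hne : NeZero (2 * m) := ⟨by have := NeZero.pos m; omega⟩
  have hlt : j.val < 2 * m := j.val_lt
  have hmval : ((m : ℕ) : ZMod (2 * m)).val = m := by
    rw [ZMod.val_natCast, Nat.mod_eq_of_lt (by have := NeZero.pos m; omega)]
  rw [ZMod.val_add, hmval, Nat.mod_eq_sub_mod (by omega), Nat.mod_eq_of_lt (by omega)]
  omega

lemma isCyclic_zpowers {G : Type*} [Group G] (g : G) :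
    IsCyclic (Subgroup.zpowers g) := by
  refine ⟨⟨g, Subgroup.mem_zpowers g⟩, ?_⟩
  rintro ⟨x, k, rfl⟩
  exact Subgroup.mem_zpowers_iff.mpr ⟨k, Subtype.ext (by simp)⟩

theorem main (m : ℕ) (hm : 2 ≤ m) (k : ℕ) (hmk : m = 2 ^ k) :
    IsNPowerFreeDecomposition (G := QuaternionGroup m)
      2 (Subgroup.zpowers (QuaternionGroup.a 1)) 2
      (fun i => if i = 0 then
          {g | ∃ j : ZMod (2 * m), (j.val < m) ∧ g = QuaternionGroup.xa j}
        else
          {g | ∃ j : ZMod (2 * m), (m ≤ j.val) ∧ g = QuaternionGroup.xa j}) := by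
  haveI : NeZero m := ⟨by omega⟩
  have hne2m : NeZero (2 * m) := ⟨by omega⟩
  have hcardC : Nat.card (Subgroup.zpowers (a 1 : QuaternionGroup m)) = 2 * m := by
    rw [Nat.card_zpowers, orderOf_a_one]
  refine ⟨Nat.prime_two, isCyclic_zpowers _, ⟨k + 1, ?_⟩, ?_, ?_, ?_, ?_, ?_, ?_⟩
  · rw [hcardC, hmk, pow_succ]; ring
  · -- maximality
    intro q D hq hD hk
    obtain ⟨g, hg⟩ := hD.exists_generator
    have hcard : Nat.card D = orderOf g := (orderOf_eq_card_of_forall_mem_zpowers hg).symm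
    rw [hcard, ← Subgroup.orderOf_coe, hcardC]
    exact orderOf_le hm _
  · -- cardinalities
    intro i
    have hv : ∀ t : ℕ, t < 2 * m → (((t : ℕ) : ZMod (2 * m)).val = t) := fun t ht => by
      rw [ZMod.val_natCast, Nat.mod_eq_of_lt ht]
    rcases eq_or_ne i 0 with rfl | hi
    · simp only [if_pos rfl]
      rw [Set.one_lt_ncard_iff (Set.toFinite _)]
      have h0 := hv 0 (by omega)
      have h1 := hv 1 (by omega)
      refine ⟨xa ((0 : ℕ) : ZMod (2 * m)), xa ((1 : ℕ) : ZMod (2 * m)),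
        ⟨((0 : ℕ) : ZMod (2 * m)), by omega, rfl⟩,
        ⟨((1 : ℕ) : ZMod (2 * m)), by omega, rfl⟩, fun h => ?_⟩
      have := xa.inj h
      rw [this] at h0
      omega
    · simp only [if_neg hi]
      rw [Set.one_lt_ncard_iff (Set.toFinite _)]
      have h0 := hv m (by omega)
      have h1 := hv (m + 1) (by omega)
      refine ⟨xa ((m : ℕ) : ZMod (2 * m)), xa ((m + 1 : ℕ) : ZMod (2 * m)),
        ⟨((m : ℕ) : ZMod (2 * m)), by omega, rfl⟩,
        ⟨((m + 1 : ℕ) : ZMod (2 * m)), by omega, rfl⟩, fun h => ?_⟩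
      have := xa.inj h
      rw [this] at h0
      omega
  · -- independence
    intro i x hx y hy hxy hadj
    obtain ⟨-, hpow⟩ := hadj
    rcases eq_or_ne i 0 with rfl | hi
    · simp only [if_pos rfl] at hx hy
      obtain ⟨jx, hjx, rfl⟩ := hx
      obtain ⟨jy, hjy, rfl⟩ := hy
      have hne : jx ≠ jy := fun h => hxy (by rw [h])
      rcases hpow with h | h
      · rcases xa_mem_zpowers_xa h with h' | h'
        · exact hne h'
        · have := val_add_m_of_lt hjy
          rw [← h'] at this
          omega
      · rcases xa_mem_zpowers_xa h with h' | h'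
        · exact hne h'.symm
        · have := val_add_m_of_lt hjx
          rw [← h'] at this
          omega
    · simp only [if_neg hi] at hx hy
      obtain ⟨jx, hjx, rfl⟩ := hx
      obtain ⟨jy, hjy, rfl⟩ := hy
      have hne : jx ≠ jy := fun h => hxy (by rw [h])
      rcases hpow with h | h
      · rcases xa_mem_zpowers_xa h with h' | h'
        · exact hne h'
        · have := val_add_m_of_ge hjy
          rw [← h'] at this
          have := jy.val_lt
          omega
      · rcases xa_mem_zpowers_xa h with h' | h'
        · exact hne h'.symm
        · have := val_add_m_of_ge hjx
          rw [← h'] at this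
          have := jx.val_lt
          omega
  · -- union
    rw [Set.eq_univ_iff_forall]
    intro g
    cases g with
    | a i =>
      left
      exact (mem_zpowers_a_one_iff _).mpr ⟨i, rfl⟩
    | xa i =>
      right
      rcases lt_or_ge i.val m with h | h
      · exact Set.mem_iUnion.mpr ⟨0, by simp only [if_pos rfl]; exact ⟨i, h, rfl⟩⟩
      · refine Set.mem_iUnion.mpr ⟨1, ?_⟩
        simp only [show (1 : Fin 2) ≠ 0 by decide, if_neg]
        exact ⟨i, h, rfl⟩
  · -- C disjoint from B i
    intro i
    rw [Set.disjoint_left]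
    intro x hxC hxB
    obtain ⟨j, rfl⟩ := (mem_zpowers_a_one_iff _).mp hxC
    rcases eq_or_ne i 0 with rfl | hi
    · simp only [if_pos rfl] at hxB
      obtain ⟨j', -, h⟩ := hxB
      exact absurd h (by simp)
    · simp only [if_neg hi] at hxB
      obtain ⟨j', -, h⟩ := hxB
      exact absurd h (by simp)
  · -- pairwise disjoint
    intro i j hij
    have key : Disjoint {g : QuaternionGroup m | ∃ j : ZMod (2 * m), (j.val < m) ∧ g = xa j}
        {g : QuaternionGroup m | ∃ j : ZMod (2 * m), (m ≤ j.val) ∧ g = xa j} := by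
      rw [Set.disjoint_left]
      rintro x ⟨j1, hj1, rfl⟩ ⟨j2, hj2, h⟩
      rw [xa.inj h] at hj1
      omega
    fin_cases i <;> fin_cases j
    · exact absurd rfl hij
    · simpa using key
    · simpa using key.symm
    · exact absurd rfl hij

end QGaux

/-- For `n ≥ 3`, the generalized quaternion group `Q_{2^n}` (realized in Mathlib as
`QuaternionGroup (2^(n-2))`, of order `2^n`) has a 2-power-free decomposition
`Q_{2^n} = C ⊎ B₁ ⊎ B₂` with `C = ⟨x⟩` the cyclic subgroup of order `2^(n-1)`,
`B₁ = {y, xy, …, x^(2^(n-2)-1) y}` and `B₂ = {x^(2^(n-2)) y, …, x^(2^(n-1)-1) y}`. -/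
theorem quaternionGroup_two_powerFreeDecomposition (n : ℕ) (hn : 3 ≤ n) :
    IsNPowerFreeDecomposition (G := QuaternionGroup (2 ^ (n - 2)))
      2 (Subgroup.zpowers (QuaternionGroup.a 1)) 2
      (fun i => if i = 0 then
          {g | ∃ j : ZMod (2 * 2 ^ (n - 2)), (j.val < 2 ^ (n - 2)) ∧
            g = QuaternionGroup.xa j}
        else
          {g | ∃ j : ZMod (2 * 2 ^ (n - 2)), (2 ^ (n - 2) ≤ j.val) ∧
            g = QuaternionGroup.xa j}) := by
  refine QGaux.main (2 ^ (n - 2)) ?_ (n - 2) rfl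
  calc (2 : ℕ) = 2 ^ 1 := (pow_one 2).symm
    _ ≤ 2 ^ (n - 2) := Nat.pow_le_pow_right (by norm_num) (by omega)
end

section
/- Let G be a finite group and let H_1, H_2, …, H_t be nontrivial subgroups of G such that H_i ∩ H_j = {1} for all 1 ≤ i < j ≤ t. Then κ_P(G) ≥ κ_P(H_1) · κ_P(H_2) ⋯ κ_P(H_t), where κ_P(H_i) denotes the number of spanning trees of the induced subgraph of the power graph of G on H_i. -/
namespace TreeNumberAux
open SimpleGraph Function

instance fin_sg {V : Type*} [Finite V] : Finite (SimpleGraph V) :=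
  Finite.of_injective (fun G => G.Adj) fun _ _ h => SimpleGraph.ext h



/-- Every connected finite graph contains a spanning tree. -/
lemma exists_tree_le_aux [Finite V] :
    ∀ n (G : SimpleGraph V), G.edgeSet.ncard ≤ n → G.Connected → ∃ T, T ≤ G ∧ T.IsTree := by
  classical
  intro n
  induction n with
  | zero =>
    intro G hn hG
    have : G.edgeSet = ∅ := by
      have := Set.ncard_eq_zero (Set.toFinite _) |>.mp (Nat.le_zero.mp hn)
      exact this
    rw [SimpleGraph.edgeSet_eq_empty] at this
    subst this
    exact ⟨⊥, le_rfl, ⟨hG, SimpleGraph.isAcyclic_bot⟩⟩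
  | succ n ih =>
    intro G hn hG
    by_cases hac : G.IsAcyclic
    · exact ⟨G, le_rfl, ⟨hG, hac⟩⟩
    · rw [SimpleGraph.IsAcyclic] at hac
      push_neg at hac
      obtain ⟨v, c, hc⟩ := hac
      have hne : c.edges ≠ [] := by
        intro h
        have h3 := hc.three_le_length
        rw [← SimpleGraph.Walk.length_edges, h] at h3
        simp at h3
      obtain ⟨e, he⟩ := List.exists_mem_of_ne_nil _ hne
      induction e using Sym2.ind with
      | _ u w =>
        have hre : (G \ SimpleGraph.fromEdgeSet {s(u, w)}).Reachable u w :=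
          (SimpleGraph.adj_and_reachable_delete_edges_iff_exists_cycle.mpr ⟨v, c, hc, he⟩).2
        have hadj : G.Adj u w := c.adj_of_mem_edges he
        set G' := G \ SimpleGraph.fromEdgeSet {s(u, w)} with hG'def
        have hle : G' ≤ G := sdiff_le
        have hstep : ∀ a b, (p : G.Walk a b) → G'.Reachable a b := by
          intro a b p
          induction p with
          | nil => exact SimpleGraph.Reachable.refl _
          | @cons a c b hadj' q ihq =>
            refine SimpleGraph.Reachable.trans ?_ ihq
            by_cases hcase : G'.Adj a c
            · exact hcase.reachable
            · have : s(a, c) = s(u, w) := by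
                simp only [hG'def, SimpleGraph.sdiff_adj, SimpleGraph.fromEdgeSet_adj,
                  Set.mem_singleton_iff, not_and, not_not, not_forall] at hcase
                obtain ⟨h1, h2⟩ := hcase hadj'
                exact h1
              rw [Sym2.eq_iff] at this
              rcases this with ⟨rfl, rfl⟩ | ⟨rfl, rfl⟩
              · exact hre
              · exact hre.symm
        have hG'conn : G'.Connected := by
          haveI : Nonempty V := hG.nonempty
          exact SimpleGraph.Connected.mk fun a b => hstep a b (hG.preconnected a b).some
        have hcard : G'.edgeSet.ncard ≤ n := by
          have hmem : s(u, w) ∈ G.edgeSet := hadj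
          have : G'.edgeSet = G.edgeSet \ {s(u, w)} := by
            rw [hG'def, SimpleGraph.edgeSet_sdiff, SimpleGraph.edgeSet_fromEdgeSet,
              SimpleGraph.edgeSet_sdiff_sdiff_isDiag]
          rw [this]
          have hlt : (G.edgeSet \ {s(u, w)}).ncard < G.edgeSet.ncard :=
            Set.ncard_diff_singleton_lt_of_mem hmem (Set.toFinite _)
          omega
        obtain ⟨T, hT, hTt⟩ := ih G' hcard hG'conn
        exact ⟨T, hT.trans hle, hTt⟩

lemma exists_tree_le [Finite V] {G : SimpleGraph V} (h : G.Connected) :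
    ∃ T, T ≤ G ∧ T.IsTree :=
  exists_tree_le_aux G.edgeSet.ncard G le_rfl h

lemma treeNumber_pos [Finite V] {G : SimpleGraph V} (h : G.Connected) :
    0 < treeNumber G := by
  obtain ⟨T, hT, hTt⟩ := exists_tree_le h
  haveI : Nonempty {T : SimpleGraph V // T ≤ G ∧ T.IsTree} := ⟨⟨T, hT, hTt⟩⟩
  exact Nat.card_pos

/-- Tree-number as ncard version of edge counting. -/
lemma isTree_of_connected_of_card [Finite V] {G : SimpleGraph V}
    (h : G.Connected) (hcard : G.edgeSet.ncard + 1 = Nat.card V) : G.IsTree := by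
  classical
  haveI : Fintype V := Fintype.ofFinite V
  haveI : DecidableEq V := Classical.decEq V
  obtain ⟨T, hT, hTt⟩ := exists_tree_le h
  haveI : Fintype T.edgeSet := Fintype.ofFinite _
  haveI : Fintype G.edgeSet := Fintype.ofFinite _
  have hTcard : T.edgeFinset.card + 1 = Fintype.card V := hTt.card_edgeFinset
  have hsub : T.edgeFinset ⊆ G.edgeFinset := by
    intro e he
    rw [SimpleGraph.mem_edgeFinset] at he ⊢
    exact SimpleGraph.edgeSet_mono hT he
  have hgc : G.edgeFinset.card = G.edgeSet.ncard := (Set.ncard_eq_toFinset_card' _).symm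
  have hNat : Nat.card V = Fintype.card V := Nat.card_eq_fintype_card
  have hcc : G.edgeFinset.card ≤ T.edgeFinset.card := by omega
  have : T.edgeFinset = G.edgeFinset := Finset.eq_of_subset_of_card_le hsub hcc
  have hTG : T = G := by
    rw [← SimpleGraph.edgeFinset_inj]
    exact this
  rw [← hTG]
  exact hTt


lemma ncard_edgeSet_of_isTree {W : Type*} [Finite W] {T : SimpleGraph W} (h : T.IsTree) :
    T.edgeSet.ncard + 1 = Nat.card W := by
  classical
  haveI : Fintype W := Fintype.ofFinite W
  haveI : Fintype T.edgeSet := Fintype.ofFinite _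
  rw [Set.ncard_eq_toFinset_card', Nat.card_eq_fintype_card]
  simpa [SimpleGraph.edgeFinset] using h.card_edgeFinset

lemma glue {V : Type*} [Finite V] (G : SimpleGraph V) (v0 : V)
    {ι : Type*} [Fintype ι] (S : ι → Set V) (hmem : ∀ i, v0 ∈ S i)
    (hcover : ∀ x, ∃ i, x ∈ S i)
    (hpair : ∀ i j, i ≠ j → ∀ x, x ∈ S i → x ∈ S j → x = v0) :
    ∏ i, treeNumber (G.induce (S i)) ≤ treeNumber G := by
  classical
  haveI : Fintype V := Fintype.ofFinite V
  haveI : Nonempty V := ⟨v0⟩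
  -- the type of spanning trees of the i-th induced subgraph
  let A : ι → Type _ := fun i => {T : SimpleGraph (S i) // T ≤ G.induce (S i) ∧ T.IsTree}
  -- the glued graph
  let glued : (∀ i, A i) → SimpleGraph V := fun f =>
    { Adj := fun x y => ∃ i, ∃ hx : x ∈ S i, ∃ hy : y ∈ S i, (f i).1.Adj ⟨x, hx⟩ ⟨y, hy⟩
      symm := ⟨by rintro x y ⟨i, hx, hy, h⟩; exact ⟨i, hy, hx, h.symm⟩⟩
      loopless := ⟨by rintro x ⟨i, hx, hy, h⟩; exact h.ne (Subtype.ext rfl)⟩ }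
  have hAdj : ∀ f x y, (glued f).Adj x y ↔
      ∃ i, ∃ hx : x ∈ S i, ∃ hy : y ∈ S i, (f i).1.Adj ⟨x, hx⟩ ⟨y, hy⟩ := fun _ _ _ => Iff.rfl
  have hle : ∀ f, glued f ≤ G := by
    rintro f x y ⟨i, hx, hy, h⟩
    exact (f i).2.1 h
  have hconn : ∀ f, (glued f).Connected := by
    intro f
    refine SimpleGraph.Connected.mk fun a b => ?_
    have key : ∀ x, (glued f).Reachable x v0 := by
      intro x
      obtain ⟨i, hx⟩ := hcover x
      let hhom : (f i).1 →g glued f :=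
        ⟨Subtype.val, fun {a b} h => ⟨i, a.2, b.2, h⟩⟩
      exact ((f i).2.2.isConnected.preconnected ⟨x, hx⟩ ⟨v0, hmem i⟩).map hhom
    exact (key a).trans (key b).symm
  have hedge : ∀ f, (glued f).edgeSet.ncard = ∑ i, (f i).1.edgeSet.ncard := by
    intro f
    set E : ι → Finset (Sym2 V) :=
      fun i => (Set.toFinite ((f i).1.edgeSet)).toFinset.image
        (Sym2.map (Subtype.val : S i → V)) with hE
    have hmemE : ∀ i e, e ∈ E i ↔
        ∃ e' ∈ (f i).1.edgeSet, Sym2.map (Subtype.val : S i → V) e' = e := by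
      intro i e
      simp only [hE, Finset.mem_image, Set.Finite.mem_toFinset]
    have hdecomp : (Set.toFinite (glued f).edgeSet).toFinset = Finset.univ.biUnion E := by
      ext e
      induction e using Sym2.ind with
      | _ x y =>
        simp only [Set.Finite.mem_toFinset, SimpleGraph.mem_edgeSet, Finset.mem_biUnion,
          Finset.mem_univ, true_and, hmemE]
        constructor
        · rintro ⟨i, hx, hy, h⟩
          exact ⟨i, s(⟨x, hx⟩, ⟨y, hy⟩), h, rfl⟩
        · rintro ⟨i, e', he', heq⟩
          induction e' using Sym2.ind with
          | _ a b =>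
            rw [Sym2.map_pair_eq, Sym2.eq_iff] at heq
            rw [SimpleGraph.mem_edgeSet] at he'
            rcases heq with ⟨ha, hb⟩ | ⟨ha, hb⟩
            · subst ha; subst hb; exact ⟨i, a.2, b.2, he'⟩
            · subst ha; subst hb; exact ⟨i, b.2, a.2, he'.symm⟩
    have hdisj : ∀ i ∈ Finset.univ, ∀ j ∈ Finset.univ, i ≠ j → Disjoint (E i) (E j) := by
      intro i _ j _ hij
      rw [Finset.disjoint_left]
      intro e hei hej
      rw [hmemE] at hei hej
      obtain ⟨e1, he1, rfl⟩ := hei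
      obtain ⟨e2, he2, heq⟩ := hej
      induction e1 using Sym2.ind with
      | _ a b =>
        induction e2 using Sym2.ind with
        | _ c d =>
          rw [SimpleGraph.mem_edgeSet] at he1 he2
          rw [Sym2.map_pair_eq, Sym2.map_pair_eq, Sym2.eq_iff] at heq
          have hab : (a : V) ≠ (b : V) := fun h => he1.ne (Subtype.ext h)
          have haj : (a : V) ∈ S j ∧ (b : V) ∈ S j := by
            rcases heq with ⟨h1, h2⟩ | ⟨h1, h2⟩
            · exact ⟨h1 ▸ c.2, h2 ▸ d.2⟩
            · exact ⟨h2 ▸ d.2, h1 ▸ c.2⟩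
          exact hab ((hpair i j hij a a.2 haj.1).trans (hpair i j hij b b.2 haj.2).symm)
    have hcards : ∀ i, (E i).card = (f i).1.edgeSet.ncard := by
      intro i
      rw [hE]
      simp only []
      rw [Finset.card_image_of_injective _ (Sym2.map.injective Subtype.val_injective)]
      exact (Set.ncard_eq_toFinset_card _ _).symm
    calc (glued f).edgeSet.ncard = ((Set.toFinite (glued f).edgeSet).toFinset).card :=
          Set.ncard_eq_toFinset_card _ _
      _ = ∑ i, (E i).card := by rw [hdecomp]; exact Finset.card_biUnion hdisj
      _ = ∑ i, (f i).1.edgeSet.ncard := by simp [hcards]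
  have hvert : Fintype.card V = ∑ i, ((S i).ncard - 1) + 1 := by
    have hsplit : (Finset.univ.erase v0) =
        Finset.univ.biUnion (fun i => (Set.toFinite (S i)).toFinset.erase v0) := by
      ext x
      simp only [Finset.mem_erase, Finset.mem_univ, and_true, Finset.mem_biUnion,
        Set.Finite.mem_toFinset, true_and]
      constructor
      · intro hx
        obtain ⟨i, hi⟩ := hcover x
        exact ⟨i, hx, hi⟩
      · rintro ⟨i, hne, _⟩
        exact hne
    have hdisj : ∀ i ∈ Finset.univ, ∀ j ∈ Finset.univ, i ≠ j →
        Disjoint ((Set.toFinite (S i)).toFinset.erase v0)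
          ((Set.toFinite (S j)).toFinset.erase v0) := by
      intro i _ j _ hij
      rw [Finset.disjoint_left]
      intro x hxi hxj
      rw [Finset.mem_erase, Set.Finite.mem_toFinset] at hxi hxj
      exact hxi.1 (hpair i j hij x hxi.2 hxj.2)
    have hcarde : ∀ i, ((Set.toFinite (S i)).toFinset.erase v0).card = (S i).ncard - 1 := by
      intro i
      rw [Finset.card_erase_of_mem ((Set.Finite.mem_toFinset _).mpr (hmem i))]
      rw [← Set.ncard_eq_toFinset_card _ _]
    have h1 : (Finset.univ.erase v0).card = ∑ i, ((S i).ncard - 1) := by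
      rw [hsplit, Finset.card_biUnion hdisj]
      exact Finset.sum_congr rfl fun i _ => hcarde i
    have h2 : (Finset.univ.erase v0).card = Fintype.card V - 1 :=
      by rw [Finset.card_erase_of_mem (Finset.mem_univ v0), Finset.card_univ]
    have h3 : 1 ≤ Fintype.card V := Fintype.card_pos
    omega
  have hTree : ∀ f, (glued f).IsTree := by
    intro f
    refine isTree_of_connected_of_card (hconn f) ?_
    rw [hedge f, Nat.card_eq_fintype_card, hvert]
    congr 1
    refine Finset.sum_congr rfl fun i _ => ?_
    have := ncard_edgeSet_of_isTree (f i).2.2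
    rw [Nat.card_coe_set_eq] at this
    omega
  let Φ : (∀ i, A i) → {T : SimpleGraph V // T ≤ G ∧ T.IsTree} :=
    fun f => ⟨glued f, hle f, hTree f⟩
  have hrec : ∀ f i (a b : S i), (f i).1.Adj a b ↔ (glued f).Adj ↑a ↑b := by
    intro f i a b
    constructor
    · intro h; exact ⟨i, a.2, b.2, h⟩
    · rintro ⟨j, hx, hy, h⟩
      by_cases hij : j = i
      · subst hij; exact h
      · exfalso
        have ha : (a : V) = v0 := hpair i j (fun h' => hij h'.symm) a a.2 hx
        have hb : (b : V) = v0 := hpair i j (fun h' => hij h'.symm) b b.2 hy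
        exact h.ne (Subtype.ext (ha.trans hb.symm))
  have hinj : Function.Injective Φ := by
    intro f g hfg
    have hglue : glued f = glued g := congrArg Subtype.val hfg
    funext i
    apply Subtype.ext
    ext a b
    rw [hrec f i a b, hrec g i a b, hglue]
  calc ∏ i, treeNumber (G.induce (S i)) = Nat.card (∀ i, A i) := (Nat.card_pi).symm
    _ ≤ Nat.card {T : SimpleGraph V // T ≤ G ∧ T.IsTree} :=
        Nat.card_le_card_of_injective Φ hinj
    _ = treeNumber G := rfl


end TreeNumberAux

/-- If `H₁, …, Hₜ` are nontrivial subgroups of a finite group `G` with pairwise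
trivial intersections, then `κ_P(G) ≥ κ_P(H₁) · κ_P(H₂) ⋯ κ_P(Hₜ)`, where `κ_P(Hᵢ)`
is the number of spanning trees of the induced subgraph of the power graph on `Hᵢ`. -/
theorem treeNumber_powerGraph_ge_prod {G : Type*} [Group G] [Finite G]
    (t : ℕ) (H : Fin t → Subgroup G) (hbot : ∀ i, H i ≠ ⊥)
    (hint : ∀ i j, i < j → H i ⊓ H j = ⊥) :
    ∏ i : Fin t, treeNumber ((powerGraph G).induce ((H i : Set G))) ≤
      treeNumber (powerGraph G) := by
  classical
  haveI : Fintype G := Fintype.ofFinite G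
  haveI : Fintype {x : G // ∀ i, x ∉ H i} := Fintype.ofFinite _
  let S : Fin t ⊕ {x : G // ∀ i, x ∉ H i} → Set G :=
    Sum.elim (fun i => (H i : Set G)) (fun x => {1, (x : G)})
  have hadj1 : ∀ u v : G, u ≠ v → (u = 1 ∨ v = 1) → (powerGraph G).Adj u v := by
    rintro u v huv (rfl | rfl)
    · exact ⟨huv, Or.inl (Subgroup.one_mem _)⟩
    · exact ⟨huv, Or.inr (Subgroup.one_mem _)⟩
  have hmem : ∀ i, (1 : G) ∈ S i := by
    rintro (i | x)
    · exact (H i).one_mem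
    · exact Set.mem_insert _ _
  have hcover : ∀ x : G, ∃ i, x ∈ S i := by
    intro x
    by_cases h : ∃ i, x ∈ H i
    · obtain ⟨i, hi⟩ := h
      exact ⟨Sum.inl i, hi⟩
    · push_neg at h
      exact ⟨Sum.inr ⟨x, h⟩, Or.inr rfl⟩
  have hpair : ∀ i j, i ≠ j → ∀ x, x ∈ S i → x ∈ S j → x = 1 := by
    rintro (i | a) (j | b) hij x hxi hxj
    · have hne : i ≠ j := fun h => hij (by rw [h])
      simp only [S, Sum.elim_inl, SetLike.mem_coe] at hxi hxj
      rcases hne.lt_or_gt with h | h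
      · have hx : x ∈ H i ⊓ H j := ⟨hxi, hxj⟩
        rw [hint i j h] at hx
        exact hx
      · have hx : x ∈ H j ⊓ H i := ⟨hxj, hxi⟩
        rw [hint j i h] at hx
        exact hx
    · simp only [S, Sum.elim_inl, Sum.elim_inr, SetLike.mem_coe, Set.mem_insert_iff,
        Set.mem_singleton_iff] at hxi hxj
      rcases hxj with rfl | rfl
      · rfl
      · exact absurd hxi (b.2 i)
    · simp only [S, Sum.elim_inl, Sum.elim_inr, SetLike.mem_coe, Set.mem_insert_iff,
        Set.mem_singleton_iff] at hxi hxj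
      rcases hxi with rfl | rfl
      · rfl
      · exact absurd hxj (a.2 j)
    · simp only [S, Sum.elim_inr, Set.mem_insert_iff, Set.mem_singleton_iff] at hxi hxj
      rcases hxi with rfl | rfl
      · rfl
      · rcases hxj with h1 | hxb
        · exact h1
        · exact absurd (congrArg Sum.inr (Subtype.ext hxb)) hij
  have hglue := TreeNumberAux.glue (powerGraph G) 1 S hmem hcover hpair
  rw [Fintype.prod_sum_type] at hglue
  have hpos : ∀ x : {x : G // ∀ i, x ∉ H i},
      0 < treeNumber ((powerGraph G).induce (S (Sum.inr x))) := by
    intro x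
    apply TreeNumberAux.treeNumber_pos
    haveI : Nonempty (S (Sum.inr x)) := ⟨⟨1, hmem _⟩⟩
    refine SimpleGraph.Connected.mk fun a b => ?_
    by_cases hab : (a : G) = (b : G)
    · rw [Subtype.ext hab]
    · apply SimpleGraph.Adj.reachable
      have ha := a.2
      have hb := b.2
      simp only [S, Sum.elim_inr, Set.mem_insert_iff, Set.mem_singleton_iff] at ha hb
      show (powerGraph G).Adj ↑a ↑b
      rcases ha with ha | ha
      · exact hadj1 _ _ hab (Or.inl ha)
      · rcases hb with hb | hb
        · exact hadj1 _ _ hab (Or.inr hb)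
        · exact absurd (ha.trans hb.symm) hab
  have hprodpos : 0 < ∏ x : {x : G // ∀ i, x ∉ H i},
      treeNumber ((powerGraph G).induce (S (Sum.inr x))) :=
    Finset.prod_pos fun x _ => hpos x
  calc ∏ i : Fin t, treeNumber ((powerGraph G).induce ((H i : Set G)))
      ≤ (∏ i : Fin t, treeNumber ((powerGraph G).induce ((H i : Set G)))) *
        ∏ x : {x : G // ∀ i, x ∉ H i},
          treeNumber ((powerGraph G).induce (S (Sum.inr x))) :=
        Nat.le_mul_of_pos_right _ hprodpos
    _ ≤ treeNumber (powerGraph G) := hglue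
end
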